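/- arXiv:1309.0477 — 2 statements merged into one kernel-verified Lean document; each statement's English description precedes it below -/
import Mathlib

section
/- Let u, ρ > 0 be smooth functions on an open subset of ℝ × ℝⁿ satisfying the compressible Euler equations ∂u/∂t + (u·∇)u = -(1/ρ)∇p(ρ) and ∂ρ/∂t + div(ρu) = 0, where p is a smooth function of ρ. Then f = log ρ satisfies the convected wave equation f̈ = div(p′(ρ)(1/ρ)∇ρ) + Σ_{i,j} (∂uⁱ/∂xʲ)(∂uʲ/∂xⁱ), where each dot denotes the material derivative ∂/∂t + u·∇. -/
open Real MeasureTheory Topology Filter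

noncomputable def pdv {n : ℕ} (f : ℝ → (Fin n → ℝ) → ℝ) (i : Fin n) (t : ℝ) (x : Fin n → ℝ) : ℝ :=
  fderiv ℝ (f t) x (Pi.single i 1)

noncomputable def tdv {n : ℕ} (f : ℝ → (Fin n → ℝ) → ℝ) (t : ℝ) (x : Fin n → ℝ) : ℝ :=
  deriv (fun s => f s x) t

/-- Material derivative `∂ₜ f + Σᵢ uⁱ ∂ᵢ f`. -/
noncomputable def matD {n : ℕ} (u : ℝ → (Fin n → ℝ) → Fin n → ℝ)
    (f : ℝ → (Fin n → ℝ) → ℝ) (t : ℝ) (x : Fin n → ℝ) : ℝ :=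
  tdv f t x + ∑ i, u t x i * pdv f i t x

/-- Spatial divergence `Σᵢ ∂ᵢ uⁱ`. -/
noncomputable def divg {n : ℕ} (u : ℝ → (Fin n → ℝ) → Fin n → ℝ) (t : ℝ) (x : Fin n → ℝ) : ℝ :=
  ∑ i, pdv (fun s y => u s y i) i t x

variable {n : ℕ}

lemma single_decomp (w : Fin n → ℝ) :
    ((1:ℝ), w) = ((1:ℝ), (0 : Fin n → ℝ)) + ∑ i, w i • (((0:ℝ), Pi.single i (1:ℝ)) : ℝ × (Fin n → ℝ)) := by
  rw [Prod.ext_iff]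
  constructor
  · simp [Prod.fst_sum]
  · show w = 0 + (∑ i, w i • (((0:ℝ), Pi.single i (1:ℝ)) : ℝ × (Fin n → ℝ))).2
    rw [Prod.snd_sum, zero_add]
    funext j
    simp [Finset.sum_apply, Pi.single_apply]

lemma zero_decomp (w : Fin n → ℝ) :
    ((0:ℝ), w) = ∑ i, w i • (((0:ℝ), Pi.single i (1:ℝ)) : ℝ × (Fin n → ℝ)) := by
  rw [Prod.ext_iff]
  constructor
  · simp [Prod.fst_sum]
  · show w = (∑ i, w i • (((0:ℝ), Pi.single i (1:ℝ)) : ℝ × (Fin n → ℝ))).2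
    rw [Prod.snd_sum]
    funext j
    simp [Finset.sum_apply, Pi.single_apply]

lemma clm_pair (L : (ℝ × (Fin n → ℝ)) →L[ℝ] ℝ) (w : Fin n → ℝ) :
    L (1, w) = L (1, 0) + ∑ i, w i * L (0, Pi.single i 1) := by
  rw [single_decomp w, map_add, map_sum]
  simp only [_root_.map_smul, smul_eq_mul]

lemma clm_zero_pair (L : (ℝ × (Fin n → ℝ)) →L[ℝ] ℝ) (w : Fin n → ℝ) :
    L (0, w) = ∑ i, w i * L (0, Pi.single i 1) := by
  rw [zero_decomp w, map_sum]
  simp only [_root_.map_smul, smul_eq_mul]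

lemma tdv_eq {f : ℝ → (Fin n → ℝ) → ℝ} {q : ℝ × (Fin n → ℝ)}
    (hf : DifferentiableAt ℝ (fun z : ℝ × (Fin n → ℝ) => f z.1 z.2) q) :
    tdv f q.1 q.2 = fderiv ℝ (fun z : ℝ × (Fin n → ℝ) => f z.1 z.2) q (1, 0) := by
  obtain ⟨t, x⟩ := q
  have h1 : HasDerivAt (fun s : ℝ => (s, x)) ((1 : ℝ), (0 : Fin n → ℝ)) t :=
    HasDerivAt.prodMk (hasDerivAt_id t) (hasDerivAt_const t x)
  have h2 := hf.hasFDerivAt.comp_hasDerivAt t h1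
  exact h2.deriv

lemma pdv_eq {f : ℝ → (Fin n → ℝ) → ℝ} {q : ℝ × (Fin n → ℝ)} (i : Fin n)
    (hf : DifferentiableAt ℝ (fun z : ℝ × (Fin n → ℝ) => f z.1 z.2) q) :
    pdv f i q.1 q.2 = fderiv ℝ (fun z : ℝ × (Fin n → ℝ) => f z.1 z.2) q ((0:ℝ), Pi.single i 1) := by
  obtain ⟨t, x⟩ := q
  have h1 : HasFDerivAt (fun y : Fin n → ℝ => (t, y))
      (((0 : (Fin n → ℝ) →L[ℝ] ℝ)).prod (ContinuousLinearMap.id ℝ _)) x :=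
    HasFDerivAt.prodMk (hasFDerivAt_const t x) (hasFDerivAt_id x)
  have h2 := (hf.hasFDerivAt.comp x h1 :
    HasFDerivAt (fun y => f t y) _ x)
  rw [pdv, show fderiv ℝ (f t) x = _ from h2.fderiv]
  simp

lemma matD_eq {u : ℝ → (Fin n → ℝ) → Fin n → ℝ} {f : ℝ → (Fin n → ℝ) → ℝ}
    {q : ℝ × (Fin n → ℝ)}
    (hf : DifferentiableAt ℝ (fun z : ℝ × (Fin n → ℝ) => f z.1 z.2) q) :
    matD u f q.1 q.2 = fderiv ℝ (fun z : ℝ × (Fin n → ℝ) => f z.1 z.2) q (1, u q.1 q.2) := by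
  conv_rhs => rw [clm_pair]
  rw [matD, tdv_eq hf]
  congr 1
  exact Finset.sum_congr rfl fun i _ => by rw [pdv_eq i hf]


/-- for a barotropic compressible fluid, `f = log ρ` satisfies the
convected wave equation `f̈ = div(p'(ρ)(1/ρ)∇ρ) + Σᵢⱼ ∂ⱼuⁱ ∂ᵢuʲ`. -/
theorem convected_wave_equation {n : ℕ} (U : Set (ℝ × (Fin n → ℝ))) (hU : IsOpen U)
    (ρ : ℝ → (Fin n → ℝ) → ℝ) (u : ℝ → (Fin n → ℝ) → Fin n → ℝ) (p : ℝ → ℝ)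
    (hρ : ContDiffOn ℝ (⊤ : ℕ∞) (fun q : ℝ × (Fin n → ℝ) => ρ q.1 q.2) U)
    (hu : ContDiffOn ℝ (⊤ : ℕ∞) (fun q : ℝ × (Fin n → ℝ) => u q.1 q.2) U)
    (hp : ContDiff ℝ (⊤ : ℕ∞) p)
    (hpos : ∀ q ∈ U, 0 < ρ q.1 q.2)
    (heuler : ∀ q ∈ U, ∀ i, matD u (fun t x => u t x i) q.1 q.2 =
      -(1 / ρ q.1 q.2) * pdv (fun t x => p (ρ t x)) i q.1 q.2)
    (hcont : ∀ q ∈ U, tdv ρ q.1 q.2 + divg (fun t x i => ρ t x * u t x i) q.1 q.2 = 0) :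
    ∀ q ∈ U, matD u (matD u (fun t x => Real.log (ρ t x))) q.1 q.2 =
      divg (fun t x i => deriv p (ρ t x) * (1 / ρ t x) * pdv ρ i t x) q.1 q.2 +
        ∑ i, ∑ j, pdv (fun t x => u t x i) j q.1 q.2 * pdv (fun t x => u t x j) i q.1 q.2 := by
  classical
  intro q hq
  have hUmem : U ∈ 𝓝 q := hU.mem_nhds hq
  -- differentiability facts
  have hRd : ∀ z ∈ U, DifferentiableAt ℝ (fun w : ℝ × (Fin n → ℝ) => ρ w.1 w.2) z := fun z hz =>
    (hρ.differentiableOn (by simp)).differentiableAt (hU.mem_nhds hz)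
  have hUic : ∀ i : Fin n, ContDiffOn ℝ (⊤:ℕ∞) (fun w : ℝ × (Fin n → ℝ) => u w.1 w.2 i) U :=
    fun i => (ContinuousLinearMap.proj i : (Fin n → ℝ) →L[ℝ] ℝ).contDiff.comp_contDiffOn hu
  have hUid : ∀ (i : Fin n), ∀ z ∈ U,
      DifferentiableAt ℝ (fun w : ℝ × (Fin n → ℝ) => u w.1 w.2 i) z := fun i z hz =>
    ((hUic i).differentiableOn (by simp)).differentiableAt (hU.mem_nhds hz)
  have hU' : ∀ i : Fin n, ContDiffOn ℝ (⊤:ℕ∞)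
      (fun z => fderiv ℝ (fun w : ℝ × (Fin n → ℝ) => u w.1 w.2 i) z) U := fun i =>
    (hUic i).fderiv_of_isOpen hU (by exact_mod_cast le_top)
  have hU'd : ∀ i : Fin n,
      DifferentiableAt ℝ (fderiv ℝ (fun w : ℝ × (Fin n → ℝ) => u w.1 w.2 i)) q := fun i =>
    ((hU' i).differentiableOn (by simp)).differentiableAt hUmem
  -- Step 1 : f-dot = - div u on U
  have key1 : ∀ z ∈ U, matD u (fun t x => Real.log (ρ t x)) z.1 z.2
      = -∑ i, fderiv ℝ (fun w : ℝ × (Fin n → ℝ) => u w.1 w.2 i) z ((0:ℝ), Pi.single i 1) := by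
    intro z hz
    have hRz := hRd z hz
    have hρz : ρ z.1 z.2 ≠ 0 := ne_of_gt (hpos z hz)
    have hlog : HasFDerivAt (fun w : ℝ × (Fin n → ℝ) => Real.log (ρ w.1 w.2))
        ((ρ z.1 z.2)⁻¹ • fderiv ℝ (fun w : ℝ × (Fin n → ℝ) => ρ w.1 w.2) z) z :=
      HasDerivAt.comp_hasFDerivAt z (Real.hasDerivAt_log hρz) hRz.hasFDerivAt
    rw [matD_eq hlog.differentiableAt,
      (by exact hlog.fderiv :
        fderiv ℝ (fun z' : ℝ × (Fin n → ℝ) => Real.log (ρ z'.1 z'.2)) z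
          = (ρ z.1 z.2)⁻¹ • fderiv ℝ (fun w : ℝ × (Fin n → ℝ) => ρ w.1 w.2) z)]
    -- continuity equation
    have hprod : ∀ i : Fin n, pdv (fun t x => ρ t x * u t x i) i z.1 z.2
        = ρ z.1 z.2 * fderiv ℝ (fun w : ℝ × (Fin n → ℝ) => u w.1 w.2 i) z ((0:ℝ), Pi.single i 1)
          + u z.1 z.2 i * fderiv ℝ (fun w : ℝ × (Fin n → ℝ) => ρ w.1 w.2) z ((0:ℝ), Pi.single i 1) := by
      intro i
      have hm : HasFDerivAt (fun w : ℝ × (Fin n → ℝ) => ρ w.1 w.2 * u w.1 w.2 i)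
          (ρ z.1 z.2 • fderiv ℝ (fun w : ℝ × (Fin n → ℝ) => u w.1 w.2 i) z
            + u z.1 z.2 i • fderiv ℝ (fun w : ℝ × (Fin n → ℝ) => ρ w.1 w.2) z) z :=
        hRz.hasFDerivAt.mul (hUid i z hz).hasFDerivAt
      rw [pdv_eq i hm.differentiableAt,
        (by exact hm.fderiv :
          fderiv ℝ (fun w : ℝ × (Fin n → ℝ) => ρ w.1 w.2 * u w.1 w.2 i) z = _)]
      simp
    have hcz := hcont z hz
    simp only [divg] at hcz
    rw [tdv_eq hRz, Finset.sum_congr rfl (fun i _ => hprod i), Finset.sum_add_distrib,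
      ← Finset.mul_sum] at hcz
    have hmain : fderiv ℝ (fun w : ℝ × (Fin n → ℝ) => ρ w.1 w.2) z (1, u z.1 z.2)
        = -(ρ z.1 z.2 * ∑ i, fderiv ℝ (fun w : ℝ × (Fin n → ℝ) => u w.1 w.2 i) z
            ((0:ℝ), Pi.single i 1)) := by
      rw [clm_pair]
      rw [show (∑ i, u z.1 z.2 i * fderiv ℝ (fun w : ℝ × (Fin n → ℝ) => ρ w.1 w.2) z
          ((0:ℝ), Pi.single i 1)) =
        ∑ i, u z.1 z.2 i * fderiv ℝ (fun w : ℝ × (Fin n → ℝ) => ρ w.1 w.2) z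
          ((0:ℝ), Pi.single i 1) from rfl]
      linarith [hcz]
    rw [ContinuousLinearMap.smul_apply, hmain, smul_eq_mul]
    field_simp
  -- Step 2 : Euler rewritten
  have key2 : ∀ z ∈ U, ∀ i : Fin n,
      deriv p (ρ z.1 z.2) * (1 / ρ z.1 z.2) *
        fderiv ℝ (fun w : ℝ × (Fin n → ℝ) => ρ w.1 w.2) z ((0:ℝ), Pi.single i 1)
      = -(fderiv ℝ (fun w : ℝ × (Fin n → ℝ) => u w.1 w.2 i) z ((1:ℝ), u z.1 z.2)) := by
    intro z hz i
    have hRz := hRd z hz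
    have hρz : ρ z.1 z.2 ≠ 0 := ne_of_gt (hpos z hz)
    have hpc : HasFDerivAt (fun w : ℝ × (Fin n → ℝ) => p (ρ w.1 w.2))
        (deriv p (ρ z.1 z.2) • fderiv ℝ (fun w : ℝ × (Fin n → ℝ) => ρ w.1 w.2) z) z :=
      HasDerivAt.comp_hasFDerivAt z ((hp.differentiable (by simp)) (ρ z.1 z.2)
        ).hasDerivAt hRz.hasFDerivAt
    have he := heuler z hz i
    rw [matD_eq (hUid i z hz), pdv_eq i hpc.differentiableAt,
      (by exact hpc.fderiv : fderiv ℝ (fun w : ℝ × (Fin n → ℝ) => p (ρ w.1 w.2)) z = _)] at he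
    rw [he]
    simp only [ContinuousLinearMap.smul_apply, smul_eq_mul]
    field_simp
  -- LHS computation
  have hterm : ∀ i : Fin n, HasFDerivAt
      (fun z => fderiv ℝ (fun w : ℝ × (Fin n → ℝ) => u w.1 w.2 i) z ((0:ℝ), Pi.single i 1))
      ((fderiv ℝ (fderiv ℝ (fun w : ℝ × (Fin n → ℝ) => u w.1 w.2 i)) q).flip
        ((0:ℝ), Pi.single i 1)) q := by
    intro i
    have h := (hU'd i).hasFDerivAt.clm_apply (hasFDerivAt_const ((0:ℝ), Pi.single i (1:ℝ)) q)
    simpa using h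
  have hHd : HasFDerivAt
      (fun z => -∑ i, fderiv ℝ (fun w : ℝ × (Fin n → ℝ) => u w.1 w.2 i) z ((0:ℝ), Pi.single i 1))
      (-∑ i, (fderiv ℝ (fderiv ℝ (fun w : ℝ × (Fin n → ℝ) => u w.1 w.2 i)) q).flip
        ((0:ℝ), Pi.single i 1)) q :=
    (HasFDerivAt.fun_sum (fun i _ => hterm i)).neg
  have hGH : (fun z : ℝ × (Fin n → ℝ) => matD u (fun t x => Real.log (ρ t x)) z.1 z.2)
      =ᶠ[𝓝 q] (fun z => -∑ i, fderiv ℝ (fun w : ℝ × (Fin n → ℝ) => u w.1 w.2 i) z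
        ((0:ℝ), Pi.single i 1)) :=
    Filter.eventuallyEq_of_mem hUmem key1
  have hGd : DifferentiableAt ℝ
      (fun z : ℝ × (Fin n → ℝ) => matD u (fun t x => Real.log (ρ t x)) z.1 z.2) q :=
    hHd.differentiableAt.congr_of_eventuallyEq hGH
  have hLHS : matD u (matD u (fun t x => Real.log (ρ t x))) q.1 q.2
      = -∑ i, fderiv ℝ (fderiv ℝ (fun w : ℝ × (Fin n → ℝ) => u w.1 w.2 i)) q
          ((1:ℝ), u q.1 q.2) ((0:ℝ), Pi.single i 1) := by
    rw [matD_eq hGd, hGH.fderiv_eq, hHd.fderiv]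
    simp
  -- RHS divergence term
  have hV : HasFDerivAt (fun w : ℝ × (Fin n → ℝ) => ((1:ℝ), u w.1 w.2))
      ((0 : (ℝ × (Fin n → ℝ)) →L[ℝ] ℝ).prod
        (ContinuousLinearMap.pi fun j =>
          fderiv ℝ (fun w : ℝ × (Fin n → ℝ) => u w.1 w.2 j) q)) q :=
    HasFDerivAt.prodMk (hasFDerivAt_const (1:ℝ) q) (hasFDerivAt_pi.2 fun j => (hUid j q hq).hasFDerivAt)
  have hΨd : ∀ i : Fin n, HasFDerivAt
      (fun z : ℝ × (Fin n → ℝ) =>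
        -(fderiv ℝ (fun w : ℝ × (Fin n → ℝ) => u w.1 w.2 i) z ((1:ℝ), u z.1 z.2)))
      (-((fderiv ℝ (fun w : ℝ × (Fin n → ℝ) => u w.1 w.2 i) q).comp
          ((0 : (ℝ × (Fin n → ℝ)) →L[ℝ] ℝ).prod (ContinuousLinearMap.pi fun j =>
            fderiv ℝ (fun w : ℝ × (Fin n → ℝ) => u w.1 w.2 j) q))
        + (fderiv ℝ (fderiv ℝ (fun w : ℝ × (Fin n → ℝ) => u w.1 w.2 i)) q).flip
            ((1:ℝ), u q.1 q.2))) q :=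
    fun i => ((hU'd i).hasFDerivAt.clm_apply hV).neg
  have keyK : ∀ i : Fin n,
      (fun z : ℝ × (Fin n → ℝ) => deriv p (ρ z.1 z.2) * (1 / ρ z.1 z.2) * pdv ρ i z.1 z.2)
      =ᶠ[𝓝 q] (fun z : ℝ × (Fin n → ℝ) =>
        -(fderiv ℝ (fun w : ℝ × (Fin n → ℝ) => u w.1 w.2 i) z ((1:ℝ), u z.1 z.2))) := by
    intro i
    filter_upwards [hUmem] with z hz
    rw [pdv_eq i (hRd z hz)]
    exact key2 z hz i
  have hKdiff : ∀ i : Fin n, DifferentiableAt ℝ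
      (fun z : ℝ × (Fin n → ℝ) => deriv p (ρ z.1 z.2) * (1 / ρ z.1 z.2) * pdv ρ i z.1 z.2) q :=
    fun i => (hΨd i).differentiableAt.congr_of_eventuallyEq (keyK i)
  have hRHS1 : divg (fun t x i => deriv p (ρ t x) * (1 / ρ t x) * pdv ρ i t x) q.1 q.2
      = ∑ i, -((∑ j, fderiv ℝ (fun w : ℝ × (Fin n → ℝ) => u w.1 w.2 j) q
              ((0:ℝ), Pi.single i 1)
            * fderiv ℝ (fun w : ℝ × (Fin n → ℝ) => u w.1 w.2 i) q ((0:ℝ), Pi.single j 1))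
          + fderiv ℝ (fderiv ℝ (fun w : ℝ × (Fin n → ℝ) => u w.1 w.2 i)) q
            ((0:ℝ), Pi.single i 1) ((1:ℝ), u q.1 q.2)) := by
    simp only [divg]
    refine Finset.sum_congr rfl fun i _ => ?_
    rw [pdv_eq i (hKdiff i), (keyK i).fderiv_eq, (hΨd i).fderiv]
    simp only [ContinuousLinearMap.neg_apply, ContinuousLinearMap.add_apply,
      ContinuousLinearMap.comp_apply, ContinuousLinearMap.prod_apply,
      ContinuousLinearMap.pi_apply, ContinuousLinearMap.flip_apply,
      ContinuousLinearMap.zero_apply]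
    rw [clm_zero_pair]
    simp only [ContinuousLinearMap.pi_apply]
  have hpdv_u : ∀ i j : Fin n, pdv (fun t x => u t x i) j q.1 q.2
      = fderiv ℝ (fun w : ℝ × (Fin n → ℝ) => u w.1 w.2 i) q ((0:ℝ), Pi.single j 1) :=
    fun i j => pdv_eq j (hUid i q hq)
  have hsymm : ∀ i : Fin n,
      fderiv ℝ (fderiv ℝ (fun w : ℝ × (Fin n → ℝ) => u w.1 w.2 i)) q
        ((1:ℝ), u q.1 q.2) ((0:ℝ), Pi.single i 1)
      = fderiv ℝ (fderiv ℝ (fun w : ℝ × (Fin n → ℝ) => u w.1 w.2 i)) q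
        ((0:ℝ), Pi.single i 1) ((1:ℝ), u q.1 q.2) := by
    intro i
    apply second_derivative_symmetric_of_eventually
    · filter_upwards [hUmem] with z hz using (hUid i z hz).hasFDerivAt
    · exact (hU'd i).hasFDerivAt
  rw [hLHS, hRHS1]
  simp only [hpdv_u]
  simp only [hsymm]
  have hcomm : ∑ i, ∑ j,
      fderiv ℝ (fun w : ℝ × (Fin n → ℝ) => u w.1 w.2 j) q ((0:ℝ), Pi.single i 1)
        * fderiv ℝ (fun w : ℝ × (Fin n → ℝ) => u w.1 w.2 i) q ((0:ℝ), Pi.single j 1)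
    = ∑ i, ∑ j,
      fderiv ℝ (fun w : ℝ × (Fin n → ℝ) => u w.1 w.2 i) q ((0:ℝ), Pi.single j 1)
        * fderiv ℝ (fun w : ℝ × (Fin n → ℝ) => u w.1 w.2 j) q ((0:ℝ), Pi.single i 1) :=
    Finset.sum_congr rfl fun i _ => Finset.sum_congr rfl fun j _ => mul_comm _ _
  simp only [neg_add, Finset.sum_add_distrib, Finset.sum_neg_distrib]
  rw [hcomm]
  ring
end

section
/- In the setting of Burgers' equation with u(t) = u₀^λ ∘ (ζ^λ(t))⁻¹, ζ^λ(t)(x) = x + t u₀^λ(x), suppose λ ↦ u₀^λ is differentiable at λ = 0 with derivative z₀, and write u = u⁰, ζ = ζ⁰, z(t) = ∂_λ u^λ(t)|_{λ=0}. Then z satisfies, along the flow, z(t)(ζ(t)(x)) = z₀(x) / (1 + t·∂ₓu₀(x)). -/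
open Real Function

/-- for a C¹ family of Burgers initial data `u₀^λ` with
`∂_λ u₀^λ|₀ = z₀`, and `u^λ(t) = u₀^λ ∘ (ζ^λ(t))⁻¹` with `ζ^λ(t)(x) = x + t u₀^λ(x)`,
the derivative `z(t) = ∂_λ u^λ(t)|₀` satisfies, along the flow of `u = u⁰`,
`z(t)(ζ(t)(x)) = z₀(x)/(1 + t·∂ₓu₀(x))`. -/
theorem burgers_derivative_in_initial_data (U0 : ℝ → ℝ → ℝ) (z₀ : ℝ → ℝ)
    (z : ℝ → ℝ → ℝ) (t : ℝ)
    (hU0 : ContDiff ℝ 2 (fun q : ℝ × ℝ => U0 q.1 q.2))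
    (hper : ∀ lam : ℝ, Function.Periodic (U0 lam) 1)
    (hz₀ : ∀ x : ℝ, HasDerivAt (fun lam => U0 lam x) (z₀ x) 0)
    (hz : ∀ s x : ℝ, HasDerivAt
      (fun lam => U0 lam (Function.invFun (fun y => y + s * U0 lam y) x)) (z s x) 0)
    (hpos : ∀ x : ℝ, 0 < 1 + t * deriv (U0 0) x) :
    ∀ x : ℝ, z t (x + t * U0 0 x) = z₀ x / (1 + t * deriv (U0 0) x) := by
  intro x
  set F : ℝ × ℝ → ℝ := fun q => U0 q.1 q.2 with hFdef
  have hFd : Differentiable ℝ F := hU0.differentiable (by norm_num)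
  have hFc : Continuous F := hU0.continuous
  -- partial derivative in the second variable
  have hpart : ∀ lam y : ℝ, HasDerivAt (U0 lam) (fderiv ℝ F (lam, y) (0, 1)) y := by
    intro lam y
    have h1 : HasDerivAt (fun s : ℝ => ((lam : ℝ), s)) ((0 : ℝ), (1 : ℝ)) y :=
      HasDerivAt.prodMk (hasDerivAt_const y lam) (hasDerivAt_id y)
    exact (hFd (lam, y)).hasFDerivAt.comp_hasDerivAt y h1
  have hderiv : ∀ lam y : ℝ, deriv (U0 lam) y = fderiv ℝ F (lam, y) (0, 1) :=
    fun lam y => (hpart lam y).deriv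
  have hUcont : ∀ lam : ℝ, Continuous (U0 lam) := by
    intro lam
    exact hFc.comp (continuous_const.prodMk continuous_id)
  -- uniform bound by periodicity and compactness
  obtain ⟨M, hM⟩ :=
    (isCompact_Icc.prod isCompact_Icc :
      IsCompact (Set.Icc (-1 : ℝ) 1 ×ˢ Set.Icc (0 : ℝ) 1)).exists_bound_of_continuousOn
      hFc.continuousOn
  have hMall : ∀ lam y : ℝ, lam ∈ Set.Icc (-1 : ℝ) 1 → |U0 lam y| ≤ M := by
    intro lam y hlam
    have hfr : U0 lam (y - (⌊y⌋ : ℝ) * 1) = U0 lam y := (hper lam).sub_int_mul_eq ⌊y⌋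
    have hmem : (lam, y - (⌊y⌋ : ℝ) * 1) ∈ Set.Icc (-1 : ℝ) 1 ×ˢ Set.Icc (0 : ℝ) 1 := by
      refine ⟨hlam, ?_, ?_⟩ <;> simp only [mul_one]
      · linarith [Int.floor_le y]
      · linarith [Int.lt_floor_add_one y]
    have := hM _ hmem
    rw [Real.norm_eq_abs] at this
    calc |U0 lam y| = |U0 lam (y - (⌊y⌋ : ℝ) * 1)| := by rw [hfr]
      _ ≤ M := this
  have hM0 : 0 ≤ M := le_trans (abs_nonneg _) (hMall 0 0 (by norm_num))
  -- the flow map at time t for parameter lam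
  set ζ : ℝ → ℝ → ℝ := fun lam y => y + t * U0 lam y with hζdef
  -- injectivity of ζ 0
  have hζ0mono : StrictMono (ζ 0) := by
    apply strictMono_of_deriv_pos
    intro y
    have hd : HasDerivAt (ζ 0) (1 + t * deriv (U0 0) y) y := by
      have := ((hpart 0 y).const_mul t).const_add ?_
      · have h2 : HasDerivAt (fun y : ℝ => y + t * U0 0 y)
            (1 + t * (fderiv ℝ F (0, y) (0, 1))) y :=
          (hasDerivAt_id y).add ((hpart 0 y).const_mul t)
        rw [hderiv 0 y]
        exact h2
      · exact 0
    rw [hd.deriv]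
    exact hpos y
  set x' : ℝ := x + t * U0 0 x with hx'
  set zv : ℝ := z t x' with hzv
  set φ : ℝ → ℝ := fun lam => U0 lam (Function.invFun (fun y => y + t * U0 lam y) x')
    with hφdef
  have hφder : HasDerivAt φ zv 0 := hz t x'
  -- φ 0 = U0 0 x
  have hζ0x : ζ 0 x = x' := rfl
  have hφ0 : φ 0 = U0 0 x := by
    have : Function.invFun (ζ 0) x' = x := by
      rw [← hζ0x]
      exact Function.leftInverse_invFun hζ0mono.injective x
    simp only [hφdef, hζdef] at this ⊢
    rw [this]
  -- for lam ∈ [-1,1], x' ∈ range (ζ lam), hence the key identity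
  have hkey : ∀ lam ∈ Set.Icc (-1 : ℝ) 1, φ lam = U0 lam (x' - t * φ lam) := by
    intro lam hlam
    have hcont : Continuous (ζ lam) := continuous_id.add (continuous_const.mul (hUcont lam))
    have hb : ∀ y : ℝ, |t * U0 lam y| ≤ |t| * M := by
      intro y
      rw [abs_mul]
      exact mul_le_mul_of_nonneg_left (hMall lam y hlam) (abs_nonneg t)
    have hab : x' - |t| * M ≤ x' + |t| * M := by
      have : 0 ≤ |t| * M := mul_nonneg (abs_nonneg t) hM0
      linarith
    have hfa : ζ lam (x' - |t| * M) ≤ x' := by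
      have := (abs_le.mp (hb (x' - |t| * M))).2
      simp only [hζdef]; linarith
    have hfb : x' ≤ ζ lam (x' + |t| * M) := by
      have := (abs_le.mp (hb (x' + |t| * M))).1
      simp only [hζdef]; linarith
    have hx'mem : x' ∈ Set.Icc (ζ lam (x' - |t| * M)) (ζ lam (x' + |t| * M)) := ⟨hfa, hfb⟩
    obtain ⟨y, _, hyx⟩ := intermediate_value_Icc hab hcont.continuousOn hx'mem
    have hrange : x' ∈ Set.range (ζ lam) := ⟨y, hyx⟩
    have hinvE : ζ lam (Function.invFun (ζ lam) x') = x' := Function.invFun_eq hrange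
    set w : ℝ := Function.invFun (ζ lam) x' with hw
    have hweq : w + t * U0 lam w = x' := hinvE
    have hφlam : φ lam = U0 lam w := rfl
    have harg : x' - t * φ lam = w := by rw [hφlam]; linarith
    rw [harg, hφlam]
  -- eventual equality near 0
  have hEq : φ =ᶠ[nhds (0 : ℝ)] fun lam => U0 lam (x' - t * φ lam) := by
    filter_upwards [Icc_mem_nhds (by norm_num : (-1 : ℝ) < 0) (by norm_num : (0 : ℝ) < 1)]
      with lam hlam
    exact hkey lam hlam
  -- derivative of the right-hand side via the chain rule
  set L : ℝ × ℝ →L[ℝ] ℝ := fderiv ℝ F (0, x) with hL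
  have hcurve : HasDerivAt (fun lam : ℝ => (lam, x' - t * φ lam))
      ((1 : ℝ), -(t * zv)) 0 :=
    HasDerivAt.prodMk (hasDerivAt_id 0) ((hφder.const_mul t).const_sub x')
  have h0 : x' - t * φ 0 = x := by rw [hφ0]; simp only [hx']; ring
  have hF0 : HasFDerivAt F L ((fun lam : ℝ => (lam, x' - t * φ lam)) 0) := by
    simp only [h0]
    exact (hFd (0, x)).hasFDerivAt
  have hcomp : HasDerivAt (fun lam => U0 lam (x' - t * φ lam)) (L (1, -(t * zv))) 0 :=
    by have := hF0.comp_hasDerivAt 0 hcurve; exact this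
  have hφder2 : HasDerivAt φ (L (1, -(t * zv))) 0 := hcomp.congr_of_eventuallyEq hEq
  have huniq : zv = L (1, -(t * zv)) := hφder.unique hφder2
  -- identify the partial derivatives
  have hL10 : L (1, 0) = z₀ x := by
    have h1 : HasDerivAt (fun lam : ℝ => ((lam : ℝ), x)) ((1 : ℝ), (0 : ℝ)) 0 :=
      HasDerivAt.prodMk (hasDerivAt_id 0) (hasDerivAt_const 0 x)
    have h2 : HasDerivAt (fun lam => U0 lam x) (L (1, 0)) 0 :=
      by have := (hFd (0, x)).hasFDerivAt.comp_hasDerivAt 0 h1; exact this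
    exact (h2.unique (hz₀ x))
  have hL01 : L (0, 1) = deriv (U0 0) x := (hderiv 0 x).symm
  have hlin : L (1, -(t * zv)) = L (1, 0) + (-(t * zv)) * L (0, 1) := by
    have : ((1 : ℝ), -(t * zv)) = ((1 : ℝ), (0 : ℝ)) + (-(t * zv)) • ((0 : ℝ), (1 : ℝ)) := by
      simp [Prod.ext_iff]
    rw [this, map_add, map_smul]
    simp [smul_eq_mul]
  rw [hlin, hL10, hL01] at huniq
  have hne : 1 + t * deriv (U0 0) x ≠ 0 := ne_of_gt (hpos x)
  rw [hzv] at huniq ⊢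
  field_simp
  linarith [huniq]
end
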